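/- Let H be a weak bialgebra over a field k, let A be a unital associative k-algebra, and let f : H⊗H → A be a k-linear map such that f(h⊗g) = Σ f(h₍₁₎⊗g₍₁₎) ε(h₍₂₎g₍₂₎) for all h,g ∈ H. Then f(h·Π^R(g) ⊗ l) = f(h ⊗ Π^R(g)·l) for all h,g,l ∈ H. -/

import Mathlib

/-!
Common framework: weak bialgebras, weak Hopf algebras, weak measures and
unitary weak crossed products, formalized via linear maps over a field `k`.
Sweedler sums are expressed by composites of canonical linear maps.
-/

open TensorProduct

set_option autoImplicit false
set_option maxHeartbeats 1000000

noncomputable section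

namespace WeakCrossed

variable (k : Type*) [Field k]
variable (H : Type*) [Ring H] [Algebra k H] [Coalgebra k H]
variable (A : Type*) [Ring A] [Algebra k A]

/-- The comultiplication of `H`. -/
abbrev comulH : H →ₗ[k] H ⊗[k] H := Coalgebra.comul

/-- The counit of `H`. -/
abbrev counitH : H →ₗ[k] k := Coalgebra.counit

/-- The rearrangement `(M ⊗ N) ⊗ P ≃ (M ⊗ P) ⊗ N`. -/
def rightComm (M N P : Type*) [AddCommGroup M] [AddCommGroup N] [AddCommGroup P]
    [Module k M] [Module k N] [Module k P] :
    (M ⊗[k] N) ⊗[k] P ≃ₗ[k] (M ⊗[k] P) ⊗[k] N :=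
  TensorProduct.assoc k M N P ≪≫ₗ
    TensorProduct.congr (LinearEquiv.refl k M) (TensorProduct.comm k N P) ≪≫ₗ
      (TensorProduct.assoc k M P N).symm

/-- The comultiplication of the tensor product coalgebra `H ⊗ H`:
`h ⊗ g ↦ Σ (h₍₁₎ ⊗ g₍₁₎) ⊗ (h₍₂₎ ⊗ g₍₂₎)`. -/
def comul2 : H ⊗[k] H →ₗ[k] (H ⊗[k] H) ⊗[k] (H ⊗[k] H) :=
  (TensorProduct.tensorTensorTensorComm k H H H H).toLinearMap ∘ₗ
    TensorProduct.map (comulH k H) (comulH k H)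

/-- Iterated comultiplication `h ↦ Σ (h₍₁₎ ⊗ h₍₂₎) ⊗ h₍₃₎`. -/
def comul3H : H →ₗ[k] (H ⊗[k] H) ⊗[k] H :=
  LinearMap.rTensor H (comulH k H) ∘ₗ comulH k H

/-- The comultiplication of the tensor product coalgebra `(H ⊗ H) ⊗ H`. -/
def comul3 : (H ⊗[k] H) ⊗[k] H →ₗ[k]
    ((H ⊗[k] H) ⊗[k] H) ⊗[k] ((H ⊗[k] H) ⊗[k] H) :=
  (TensorProduct.tensorTensorTensorComm k (H ⊗[k] H) (H ⊗[k] H) H H).toLinearMap ∘ₗ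
    TensorProduct.map (comul2 k H) (comulH k H)

/-- The target map `Π^L(h) = Σ ε(1₍₁₎ h) 1₍₂₎`. -/
def piL : H →ₗ[k] H :=
  (TensorProduct.lid k H).toLinearMap ∘ₗ
    TensorProduct.map (counitH k H) (LinearMap.id : H →ₗ[k] H) ∘ₗ
      LinearMap.mulLeft k (comulH k H 1) ∘ₗ (TensorProduct.mk k H H).flip 1

/-- The source map `Π^R(h) = Σ 1₍₁₎ ε(h 1₍₂₎)`. -/
def piR : H →ₗ[k] H :=
  (TensorProduct.rid k H).toLinearMap ∘ₗ
    TensorProduct.map (LinearMap.id : H →ₗ[k] H) (counitH k H) ∘ₗ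
      LinearMap.mulRight k (comulH k H 1) ∘ₗ TensorProduct.mk k H H 1

/-- The axioms of a weak bialgebra:  `Δ` is multiplicative, the weak counit
axiom `ε(xyz) = Σ ε(x y₍₁₎) ε(y₍₂₎ z) = Σ ε(x y₍₂₎) ε(y₍₁₎ z)` holds, and the
weak unit axiom
`(Δ⊗id)(Δ(1)) = (Δ(1)⊗1)(1⊗Δ(1)) = (1⊗Δ(1))(Δ(1)⊗1)` holds. -/
structure IsWeakBialgebra : Prop where
  comul_mul : ∀ x y : H, comulH k H (x * y) = comulH k H x * comulH k H y
  counit_mul : ∀ x y z : H,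
    counitH k H (x * y * z) =
      (LinearMap.mul' k k ∘ₗ TensorProduct.map
        (counitH k H ∘ₗ LinearMap.mulLeft k x)
        (counitH k H ∘ₗ LinearMap.mulRight k z)) (comulH k H y)
  counit_mul_op : ∀ x y z : H,
    counitH k H (x * y * z) =
      (LinearMap.mul' k k ∘ₗ TensorProduct.map
        (counitH k H ∘ₗ LinearMap.mulLeft k x)
        (counitH k H ∘ₗ LinearMap.mulRight k z))
        (TensorProduct.comm k H H (comulH k H y))
  comul_one_left :
    comul3H k H 1 =
      (comulH k H 1 ⊗ₜ[k] (1 : H)) *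
        (TensorProduct.assoc k H H H).symm ((1 : H) ⊗ₜ[k] comulH k H 1)
  comul_one_right :
    comul3H k H 1 =
      ((TensorProduct.assoc k H H H).symm ((1 : H) ⊗ₜ[k] comulH k H 1)) *
        (comulH k H 1 ⊗ₜ[k] (1 : H))

/-- The axioms of an antipode of a weak Hopf algebra:
`Σ h₍₁₎ S(h₍₂₎) = Π^L(h)`, `Σ S(h₍₁₎) h₍₂₎ = Π^R(h)` and
`Σ S(h₍₁₎) h₍₂₎ S(h₍₃₎) = S(h)`. -/
structure IsWeakHopf (S : H →ₗ[k] H) : Prop where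
  antipode_left : ∀ h : H,
    LinearMap.mul' k H (LinearMap.lTensor H S (comulH k H h)) = piL k H h
  antipode_right : ∀ h : H,
    LinearMap.mul' k H (LinearMap.rTensor H S (comulH k H h)) = piR k H h
  antipode_mid : ∀ h : H,
    LinearMap.mul' k H
      (TensorProduct.map (LinearMap.mul' k H ∘ₗ LinearMap.rTensor H S) S
        (comul3H k H h)) = S h

variable {k H A}

/-- `h ↦ ρ(h ⊗ a)`. -/
def rhoAt (ρ : H ⊗[k] A →ₗ[k] A) (a : A) : H →ₗ[k] A :=
  ρ ∘ₗ (TensorProduct.mk k H A).flip a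

/-- `ρ` is a weak measure of `H` on `A`:
`ρ(h ⊗ ab) = Σ ρ(h₍₁₎ ⊗ a) ρ(h₍₂₎ ⊗ b)`. -/
def IsWeakMeasure (ρ : H ⊗[k] A →ₗ[k] A) : Prop :=
  ∀ (h : H) (a b : A),
    ρ (h ⊗ₜ[k] (a * b)) =
      (LinearMap.mul' k A ∘ₗ TensorProduct.map ρ ρ)
        (TensorProduct.tensorTensorTensorComm k H H A A
          (comulH k H h ⊗ₜ[k] (a ⊗ₜ[k] b)))

/-- Convolution product on `Hom(H, B)`: `(α * β)(h) = Σ α(h₍₁₎) β(h₍₂₎)`. -/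
def conv1 {B : Type*} [Ring B] [Algebra k B] (α β : H →ₗ[k] B) : H →ₗ[k] B :=
  LinearMap.mul' k B ∘ₗ TensorProduct.map α β ∘ₗ comulH k H

/-- Convolution product on `Hom(H ⊗ H, A)` with respect to the tensor product
coalgebra structure of `H ⊗ H`. -/
def conv2 (α β : H ⊗[k] H →ₗ[k] A) : H ⊗[k] H →ₗ[k] A :=
  LinearMap.mul' k A ∘ₗ TensorProduct.map α β ∘ₗ comul2 k H

/-- `(h, g) ↦ Σ α(h₍₁₎ ⊗ g₍₁₎) ε(h₍₂₎ g₍₂₎)`. -/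
def convCounitR (α : H ⊗[k] H →ₗ[k] A) : H ⊗[k] H →ₗ[k] A :=
  (TensorProduct.rid k A).toLinearMap ∘ₗ
    TensorProduct.map α (counitH k H ∘ₗ LinearMap.mul' k H) ∘ₗ comul2 k H

/-- `(h, g) ↦ Σ ε(h₍₁₎ g₍₁₎) α(h₍₂₎ ⊗ g₍₂₎)`. -/
def convCounitL (α : H ⊗[k] H →ₗ[k] A) : H ⊗[k] H →ₗ[k] A :=
  (TensorProduct.lid k A).toLinearMap ∘ₗ
    TensorProduct.map (counitH k H ∘ₗ LinearMap.mul' k H) α ∘ₗ comul2 k H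

/-- `L(φ)(a ⊗ h) = Σ a φ(h₍₁₎) ⊗ h₍₂₎`. -/
def Lmap (φ : H →ₗ[k] A) : A ⊗[k] H →ₗ[k] A ⊗[k] H :=
  LinearMap.rTensor H (LinearMap.mul' k A ∘ₗ LinearMap.lTensor A φ) ∘ₗ
    (TensorProduct.assoc k A H H).symm.toLinearMap ∘ₗ
      LinearMap.lTensor A (comulH k H)

/-- The idempotent `∇_ρ(a ⊗ h) = Σ a ρ(h₍₁₎ ⊗ 1) ⊗ h₍₂₎`. -/
def nablaRho (ρ : H ⊗[k] A →ₗ[k] A) : A ⊗[k] H →ₗ[k] A ⊗[k] H :=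
  Lmap (rhoAt ρ 1)

/-- The twisting map `χ_ρ(h ⊗ a) = Σ ρ(h₍₁₎ ⊗ a) ⊗ h₍₂₎`. -/
def chiRho (ρ : H ⊗[k] A →ₗ[k] A) : H ⊗[k] A →ₗ[k] A ⊗[k] H :=
  LinearMap.rTensor H ρ ∘ₗ (rightComm k H H A).toLinearMap ∘ₗ
    LinearMap.rTensor A (comulH k H)

/-- The preunit `ν = Σ ρ(1₍₁₎ ⊗ 1_A) ⊗ 1₍₂₎ ∈ A ⊗ H`. -/
def nu (ρ : H ⊗[k] A →ₗ[k] A) : A ⊗[k] H :=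
  chiRho ρ ((1 : H) ⊗ₜ[k] (1 : A))

/-- `F_f(h ⊗ g) = Σ f(h₍₁₎ ⊗ g₍₁₎) ⊗ h₍₂₎ g₍₂₎`. -/
def Fmap (f : H ⊗[k] H →ₗ[k] A) : H ⊗[k] H →ₗ[k] A ⊗[k] H :=
  TensorProduct.map f (LinearMap.mul' k H) ∘ₗ comul2 k H

/-- The twisted module condition:
`Σ f(h₍₁₎⊗g₍₁₎) ρ(h₍₂₎g₍₂₎⊗a) = Σ ρ(h₍₁₎ ⊗ ρ(g₍₁₎⊗a)) f(h₍₂₎⊗g₍₂₎)`. -/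
def IsTwistedModule (ρ : H ⊗[k] A →ₗ[k] A) (f : H ⊗[k] H →ₗ[k] A) : Prop :=
  ∀ a : A,
    conv2 f (rhoAt ρ a ∘ₗ LinearMap.mul' k H) =
      conv2 (ρ ∘ₗ LinearMap.lTensor H (rhoAt ρ a)) f

/-- The cocycle condition:
`Σ f(h₍₁₎⊗g₍₁₎) f(h₍₂₎g₍₂₎⊗l) = Σ ρ(h₍₁₎ ⊗ f(g₍₁₎⊗l₍₁₎)) f(h₍₂₎ ⊗ g₍₂₎l₍₂₎)`. -/
def IsCocycle (ρ : H ⊗[k] A →ₗ[k] A) (f : H ⊗[k] H →ₗ[k] A) : Prop :=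
  LinearMap.mul' k A ∘ₗ
      TensorProduct.map f (f ∘ₗ LinearMap.rTensor H (LinearMap.mul' k H)) ∘ₗ
        (TensorProduct.assoc k (H ⊗[k] H) (H ⊗[k] H) H).toLinearMap ∘ₗ
          LinearMap.rTensor H (comul2 k H) =
    LinearMap.mul' k A ∘ₗ
      TensorProduct.map
        (ρ ∘ₗ LinearMap.lTensor H f ∘ₗ (TensorProduct.assoc k H H H).toLinearMap)
        (f ∘ₗ LinearMap.lTensor H (LinearMap.mul' k H) ∘ₗ
          (TensorProduct.assoc k H H H).toLinearMap) ∘ₗ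
        comul3 k H

/-- The data `(ρ, f)` of a unitary weak crossed product, i.e. conditions
(i)–(v) of the paper: `ρ` is a weak measure, `f` is normalized
(`f(h⊗g) = Σ f(h₍₁₎⊗g₍₁₎) ρ(h₍₂₎g₍₂₎⊗1)`), `f` is a cocycle satisfying the
twisted module condition, and the preunit conditions for
`ν = Σ ρ(1₍₁₎⊗1)⊗1₍₂₎` hold. -/
structure IsCrossedProdData (ρ : H ⊗[k] A →ₗ[k] A) (f : H ⊗[k] H →ₗ[k] A) : Prop where
  measure : IsWeakMeasure ρ
  normal : f = conv2 f (rhoAt ρ 1 ∘ₗ LinearMap.mul' k H)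
  twisted : IsTwistedModule ρ f
  cocycle : IsCocycle ρ f
  preunit_left : ∀ h : H,
    rhoAt ρ 1 h =
      (LinearMap.mul' k A ∘ₗ TensorProduct.map ρ f)
        (TensorProduct.tensorTensorTensorComm k H H A H
          (comulH k H h ⊗ₜ[k] nu ρ))
  preunit_right : ∀ h : H,
    rhoAt ρ 1 h =
      (LinearMap.mul' k A ∘ₗ
        LinearMap.lTensor A (f ∘ₗ (TensorProduct.mk k H H).flip h)) (nu ρ)
  preunit_mid : ∀ a : A,
    Lmap (rhoAt ρ a) (nu ρ) =
      LinearMap.rTensor H (LinearMap.mulLeft k a) (nu ρ)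

/-- `E = A ×_ρ^f H`, the image of the idempotent `∇_ρ`. -/
abbrev CrossE (ρ : H ⊗[k] A →ₗ[k] A) : Submodule k (A ⊗[k] H) :=
  LinearMap.range (nablaRho ρ)

/-- The inclusion `ι : E → A ⊗ H`. -/
def iotaE (ρ : H ⊗[k] A →ₗ[k] A) : CrossE ρ →ₗ[k] A ⊗[k] H :=
  (CrossE ρ).subtype

/-- The projection `p : A ⊗ H → E`, the corestriction of `∇_ρ`. -/
def pE (ρ : H ⊗[k] A →ₗ[k] A) : A ⊗[k] H →ₗ[k] CrossE ρ :=
  (nablaRho ρ).rangeRestrict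

/-- The product `μ♯((a⊗h)⊗(b⊗g)) = Σ a ρ(h₍₁₎⊗b) f(h₍₂₎⊗g₍₁₎) ⊗ h₍₃₎g₍₂₎`. -/
def muSharp (ρ : H ⊗[k] A →ₗ[k] A) (f : H ⊗[k] H →ₗ[k] A) :
    (A ⊗[k] H) ⊗[k] (A ⊗[k] H) →ₗ[k] A ⊗[k] H :=
  LinearMap.rTensor H (LinearMap.mul' k A) ∘ₗ
  (TensorProduct.assoc k A A H).symm.toLinearMap ∘ₗ
  LinearMap.lTensor A
    (LinearMap.rTensor H (LinearMap.mul' k A) ∘ₗ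
     (TensorProduct.assoc k A A H).symm.toLinearMap ∘ₗ
     LinearMap.lTensor A (Fmap f) ∘ₗ
     (TensorProduct.assoc k A H H).toLinearMap ∘ₗ
     LinearMap.rTensor H (chiRho ρ) ∘ₗ
     (TensorProduct.assoc k H A H).symm.toLinearMap) ∘ₗ
  (TensorProduct.assoc k A H (A ⊗[k] H)).toLinearMap

/-- The product of the unitary crossed product `E = A ×_ρ^f H`. -/
def crossMul (ρ : H ⊗[k] A →ₗ[k] A) (f : H ⊗[k] H →ₗ[k] A) (x y : CrossE ρ) :
    CrossE ρ :=
  pE ρ (muSharp ρ f (iotaE ρ x ⊗ₜ[k] iotaE ρ y))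

/-- The product of the crossed product as a linear map. -/
def mulE (ρ : H ⊗[k] A →ₗ[k] A) (f : H ⊗[k] H →ₗ[k] A) :
    CrossE ρ ⊗[k] CrossE ρ →ₗ[k] CrossE ρ :=
  pE ρ ∘ₗ muSharp ρ f ∘ₗ TensorProduct.map (iotaE ρ) (iotaE ρ)

/-- The unit `1_E = p(ν)` of the crossed product. -/
def crossOne (ρ : H ⊗[k] A →ₗ[k] A) : CrossE ρ := pE ρ (nu ρ)

/-- `γ(h) = p(1_A ⊗ h)`. -/
def gammaE (ρ : H ⊗[k] A →ₗ[k] A) : H →ₗ[k] CrossE ρ :=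
  pE ρ ∘ₗ TensorProduct.mk k A H 1

/-- `a ↦ Σ a ν_A ⊗ ν_H`. -/
def jnuAux (ρ : H ⊗[k] A →ₗ[k] A) : A →ₗ[k] A ⊗[k] H :=
  LinearMap.rTensor H (LinearMap.mul' k A) ∘ₗ
    (TensorProduct.assoc k A A H).symm.toLinearMap ∘ₗ
      (TensorProduct.mk k A (A ⊗[k] H)).flip (nu ρ)

/-- `j_ν(a) = p(Σ a ν_A ⊗ ν_H)`. -/
def jnuE (ρ : H ⊗[k] A →ₗ[k] A) : A →ₗ[k] CrossE ρ := pE ρ ∘ₗ jnuAux ρ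

/-- The left action `a ▸ (b ⊗ h) = ab ⊗ h` of `A` on `A ⊗ H`. -/
def aAct (a : A) : A ⊗[k] H →ₗ[k] A ⊗[k] H :=
  LinearMap.rTensor H (LinearMap.mulLeft k a)

/-- The comodule structure `δ_E = (p ⊗ id) ∘ (id ⊗ Δ) ∘ ι` of the crossed
product. -/
def deltaE (ρ : H ⊗[k] A →ₗ[k] A) : CrossE ρ →ₗ[k] CrossE ρ ⊗[k] H :=
  LinearMap.rTensor H (pE ρ) ∘ₗ
    (TensorProduct.assoc k A H H).symm.toLinearMap ∘ₗ
      LinearMap.lTensor A (comulH k H) ∘ₗ iotaE ρ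

/-- The componentwise product `(x⊗h)(y⊗g) = x·y ⊗ hg` on `E ⊗ H`. -/
def mulEH (ρ : H ⊗[k] A →ₗ[k] A) (f : H ⊗[k] H →ₗ[k] A) :
    (CrossE ρ ⊗[k] H) ⊗[k] (CrossE ρ ⊗[k] H) →ₗ[k] CrossE ρ ⊗[k] H :=
  TensorProduct.map (mulE ρ f) (LinearMap.mul' k H) ∘ₗ
    (TensorProduct.tensorTensorTensorComm k (CrossE ρ) H (CrossE ρ) H).toLinearMap

/-- Convolution on `Hom(H, E)` using the crossed product multiplication. -/
def convE (ρ : H ⊗[k] A →ₗ[k] A) (f : H ⊗[k] H →ₗ[k] A)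
    (α β : H →ₗ[k] CrossE ρ) : H →ₗ[k] CrossE ρ :=
  mulE ρ f ∘ₗ TensorProduct.map α β ∘ₗ comulH k H

/-- `γ⁻¹(h) = Σ j_ν(f⁻¹(S(h₍₁₎)₍₁₎ ⊗ h₍₂₎)) · γ(S(h₍₁₎)₍₂₎)`. -/
def gammaInv (ρ : H ⊗[k] A →ₗ[k] A) (f : H ⊗[k] H →ₗ[k] A)
    (S : H →ₗ[k] H) (fi : H ⊗[k] H →ₗ[k] A) : H →ₗ[k] CrossE ρ :=
  mulE ρ f ∘ₗ
    TensorProduct.map (jnuE ρ ∘ₗ fi) (gammaE ρ) ∘ₗ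
      (rightComm k H H H).toLinearMap ∘ₗ
        LinearMap.rTensor H (comulH k H) ∘ₗ
          LinearMap.rTensor H S ∘ₗ comulH k H

/-- `(id ⊗ ε) : A ⊗ H → A`. -/
def epsA : A ⊗[k] H →ₗ[k] A :=
  (TensorProduct.rid k A).toLinearMap ∘ₗ LinearMap.lTensor A (counitH k H)

/-- Right `H`-comodule algebra structure on a unital algebra `B`. -/
structure IsComodAlg {B : Type*} [Ring B] [Algebra k B]
    (δB : B →ₗ[k] B ⊗[k] H) : Prop where
  counit : ∀ b : B,
    (TensorProduct.rid k B) (LinearMap.lTensor B (counitH k H) (δB b)) = b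
  coassoc : (TensorProduct.assoc k B H H).toLinearMap ∘ₗ
      LinearMap.rTensor H δB ∘ₗ δB = LinearMap.lTensor B (comulH k H) ∘ₗ δB
  mul_compat : ∀ x y : B, δB (x * y) = δB x * δB y
  one_compat : LinearMap.lTensor B (piL k H) (δB 1) = δB 1

/-- `(B, j)` is an `H`-cleft extension of `A`, with cleaving map `γ` and
convolution inverse `γi`. -/
structure IsCleft {B : Type*} [Ring B] [Algebra k B]
    (δB : B →ₗ[k] B ⊗[k] H) (j : A →ₗ[k] B) (γ γi : H →ₗ[k] B) : Prop where
  comodAlg : IsComodAlg δB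
  j_mul : ∀ a b : A, j (a * b) = j a * j b
  j_one : j 1 = 1
  j_inj : Function.Injective j
  j_equalizes : ∀ a : A,
    LinearMap.lTensor B (piL k H) (δB (j a)) = δB (j a)
  j_equalizer : ∀ (X : Type*) [AddCommGroup X] [Module k X] (g : X →ₗ[k] B),
    (∀ x : X, LinearMap.lTensor B (piL k H) (δB (g x)) = δB (g x)) →
      ∃! g' : X →ₗ[k] A, j ∘ₗ g' = g
  colinear : ∀ h : H, δB (γ h) = LinearMap.rTensor H γ (comulH k H h)
  total : γ 1 = 1
  inv_left : conv1 γi γ = γ ∘ₗ piR k H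
  inv_right : conv1 γ γi = γ ∘ₗ piL k H
  inv_norm : conv1 (γ ∘ₗ piR k H) γi = γi
  factors : ∃ t : H →ₗ[k] A, γ ∘ₗ piL k H = j ∘ₗ t

/-- `q(x) = Σ x₍₀₎ γ⁻¹(x₍₁₎)`. -/
def qMap {B : Type*} [Ring B] [Algebra k B]
    (δB : B →ₗ[k] B ⊗[k] H) (γi : H →ₗ[k] B) : B →ₗ[k] B :=
  LinearMap.mul' k B ∘ₗ LinearMap.lTensor B γi ∘ₗ δB

/-- `ρ(h ⊗ a) = p(γ(h) j(a))`. -/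
def cleftRho {B : Type*} [Ring B] [Algebra k B]
    (γ : H →ₗ[k] B) (j : A →ₗ[k] B) (p : B →ₗ[k] A) : H ⊗[k] A →ₗ[k] A :=
  p ∘ₗ LinearMap.mul' k B ∘ₗ TensorProduct.map γ j

/-- `f(h ⊗ g) = p(γ(h) γ(g))`. -/
def cleftF {B : Type*} [Ring B] [Algebra k B]
    (γ : H →ₗ[k] B) (p : B →ₗ[k] A) : H ⊗[k] H →ₗ[k] A :=
  p ∘ₗ LinearMap.mul' k B ∘ₗ TensorProduct.map γ γ

/-- `w(a ⊗ h) = j(a) γ(h)`. -/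
def wMap {B : Type*} [Ring B] [Algebra k B]
    (j : A →ₗ[k] B) (γ : H →ₗ[k] B) : A ⊗[k] H →ₗ[k] B :=
  LinearMap.mul' k B ∘ₗ TensorProduct.map j γ

end WeakCrossed

set_option synthInstance.maxHeartbeats 1000000

namespace WeakCrossed

section StatementZeroProof

open Coalgebra

variable {k : Type*} [Field k]
    {H : Type*} [Ring H] [Algebra k H] [Coalgebra k H]
    {A : Type*} [Ring A] [Algebra k A]

private lemma counit_expand' {z : H} {ι : Type*} {s : Finset ι} {u v : ι → H}
    (hz : comulH k H z = ∑ i ∈ s, u i ⊗ₜ[k] v i) :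
    ∑ i ∈ s, counitH k H (v i) • u i = z := by
  have h := congrArg ((TensorProduct.rid k H).toLinearMap ∘ₗ
    LinearMap.lTensor H (counitH k H)) hz
  simp only [LinearMap.comp_apply, LinearEquiv.coe_coe, Coalgebra.lTensor_counit_comul,
    map_sum, LinearMap.lTensor_tmul, TensorProduct.rid_tmul, one_smul] at h
  exact h.symm

private lemma eps_split (hWB : IsWeakBialgebra k H) (x z : H) {y : H}
    {ι : Type*} {s : Finset ι} {u v : ι → H}
    (hy : comulH k H y = ∑ i ∈ s, u i ⊗ₜ[k] v i) :
    counitH k H (x * y * z)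
      = ∑ i ∈ s, counitH k H (x * u i) * counitH k H (v i * z) := by
  rw [hWB.counit_mul x y z, hy]
  simp [LinearMap.mul'_apply]

private lemma eps_split_op (hWB : IsWeakBialgebra k H) (x z : H) {y : H}
    {ι : Type*} {s : Finset ι} {u v : ι → H}
    (hy : comulH k H y = ∑ i ∈ s, u i ⊗ₜ[k] v i) :
    counitH k H (x * y * z)
      = ∑ i ∈ s, counitH k H (x * v i) * counitH k H (u i * z) := by
  rw [hWB.counit_mul_op x y z, hy]
  simp [LinearMap.mul'_apply]

private lemma comul_mul_pt (hWB : IsWeakBialgebra k H) {x y : H}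
    {ι κ : Type*} {s : Finset ι} {u v : ι → H} {t : Finset κ} {c d : κ → H}
    (hx : comulH k H x = ∑ i ∈ s, u i ⊗ₜ[k] v i)
    (hy : comulH k H y = ∑ j ∈ t, c j ⊗ₜ[k] d j) :
    comulH k H (x * y) = ∑ i ∈ s, ∑ j ∈ t, (u i * c j) ⊗ₜ[k] (v i * d j) := by
  rw [hWB.comul_mul, hx, hy, Finset.sum_mul_sum]
  simp [Algebra.TensorProduct.tmul_mul_tmul]

private lemma piR_pt (g : H) (r1 : Coalgebra.Repr k (1 : H) (H × H)) :
    piR k H g = ∑ i ∈ r1.index, counitH k H (g * r1.right i) • r1.left i := by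
  unfold piR
  rw [show comulH k H (1:H) = ∑ i ∈ r1.index, r1.left i ⊗ₜ[k] r1.right i from r1.eq.symm]
  simp [LinearMap.mulRight_apply, TensorProduct.mk_apply, Finset.mul_sum,
    Algebra.TensorProduct.tmul_mul_tmul]

private lemma hf_pt (f : H ⊗[k] H →ₗ[k] A) (hf : f = convCounitR f) {x y : H}
    {ι κ : Type*} {s : Finset ι} {u v : ι → H} {t : Finset κ} {c d : κ → H}
    (hx : comulH k H x = ∑ i ∈ s, u i ⊗ₜ[k] v i)
    (hy : comulH k H y = ∑ j ∈ t, c j ⊗ₜ[k] d j) :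
    f (x ⊗ₜ[k] y) = ∑ i ∈ s, ∑ j ∈ t,
      counitH k H (v i * d j) • f (u i ⊗ₜ[k] c j) := by
  conv_lhs => rw [hf]
  unfold convCounitR comul2
  simp only [LinearMap.comp_apply, LinearEquiv.coe_coe, TensorProduct.map_tmul]
  rw [hx, hy, TensorProduct.sum_tmul]
  simp only [TensorProduct.tmul_sum, map_sum]
  refine Finset.sum_congr rfl fun i _ => Finset.sum_congr rfl fun j _ => ?_
  simp [LinearMap.mul'_apply]

end StatementZeroProof

end WeakCrossed

namespace WeakCrossed

section StatementZeroMaps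

open Coalgebra

variable {k : Type*} [Field k]
    {H : Type*} [Ring H] [Algebra k H] [Coalgebra k H]
    {A : Type*} [Ring A] [Algebra k A]

/-- `x ⊗ (y ⊗ t) ↦ ε(g t) • (x ⊗ y)` -/
private def scalR (k : Type*) {H : Type*} [Field k] [Ring H] [Algebra k H] [Coalgebra k H]
    (g : H) : H ⊗[k] (H ⊗[k] H) →ₗ[k] H ⊗[k] H :=
  LinearMap.lTensor H ((TensorProduct.rid k H).toLinearMap ∘ₗ
    LinearMap.lTensor H (counitH k H ∘ₗ LinearMap.mulLeft k g))

private lemma scalR_tmul (g x y t : H) :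
    scalR k g (x ⊗ₜ[k] (y ⊗ₜ[k] t)) = counitH k H (g * t) • (x ⊗ₜ[k] y) := by
  simp [scalR, TensorProduct.tmul_smul]

/-- `x ⊗ (y ⊗ t) ↦ ε(g y) • (x ⊗ t)` -/
private def scalM (k : Type*) {H : Type*} [Field k] [Ring H] [Algebra k H] [Coalgebra k H]
    (g : H) : H ⊗[k] (H ⊗[k] H) →ₗ[k] H ⊗[k] H :=
  LinearMap.lTensor H ((TensorProduct.lid k H).toLinearMap ∘ₗ
    LinearMap.rTensor H (counitH k H ∘ₗ LinearMap.mulLeft k g))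

private lemma scalM_tmul (g x y t : H) :
    scalM k g (x ⊗ₜ[k] (y ⊗ₜ[k] t)) = counitH k H (g * y) • (x ⊗ₜ[k] t) := by
  simp [scalM, TensorProduct.tmul_smul]

/-- `x ⊗ y ↦ Σ ε(y * w₂) • (x * w₁)` -/
private def NH (k : Type*) {H : Type*} [Field k] [Ring H] [Algebra k H] [Coalgebra k H]
    (w : H) : H ⊗[k] H →ₗ[k] H :=
  (TensorProduct.rid k H).toLinearMap ∘ₗ LinearMap.lTensor H (counitH k H) ∘ₗ
    LinearMap.mulRight k (comulH k H w)

private lemma NH_tmul (w : H) (rw : Coalgebra.Repr k w (H × H)) (x y : H) :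
    NH k w (x ⊗ₜ[k] y)
      = ∑ j ∈ rw.index, counitH k H (y * rw.right j) • (x * rw.left j) := by
  unfold NH
  simp only [LinearMap.comp_apply, LinearMap.mulRight_apply]
  rw [show comulH k H w = ∑ j ∈ rw.index, rw.left j ⊗ₜ[k] rw.right j from rw.eq.symm,
    Finset.mul_sum]
  simp [Algebra.TensorProduct.tmul_mul_tmul]

/-- `u ⊗ v ↦ Σ ε(v * y₂) • f(u ⊗ y₁)` -/
private def B2 {k : Type*} {H A : Type*} [Field k] [Ring H] [Algebra k H] [Coalgebra k H]
    [Ring A] [Algebra k A] (f : H ⊗[k] H →ₗ[k] A) (y : H) : H ⊗[k] H →ₗ[k] A :=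
  (TensorProduct.rid k A).toLinearMap ∘ₗ
    TensorProduct.map f (counitH k H ∘ₗ LinearMap.mul' k H) ∘ₗ
    (TensorProduct.tensorTensorTensorComm k H H H H).toLinearMap ∘ₗ
    (TensorProduct.mk k (H ⊗[k] H) (H ⊗[k] H)).flip (comulH k H y)

private lemma B2_tmul (f : H ⊗[k] H →ₗ[k] A) (y : H) (ry : Coalgebra.Repr k y (H × H)) (u v : H) :
    B2 f y (u ⊗ₜ[k] v)
      = ∑ j ∈ ry.index, counitH k H (v * ry.right j) • f (u ⊗ₜ[k] ry.left j) := by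
  unfold B2
  simp only [LinearMap.comp_apply, TensorProduct.mk_apply, LinearMap.flip_apply]
  rw [show comulH k H y = ∑ j ∈ ry.index, ry.left j ⊗ₜ[k] ry.right j from ry.eq.symm,
    TensorProduct.tmul_sum]
  simp [LinearMap.mul'_apply]

/-- `W ⊗ u`-pairing core:
`core f (((a⊗b)⊗c) ⊗ ((x⊗y)⊗z)) = ε(c*z) • ε(b*y) • f (a ⊗ x)` -/
private def core {k : Type*} {H A : Type*} [Field k] [Ring H] [Algebra k H] [Coalgebra k H]
    [Ring A] [Algebra k A] (f : H ⊗[k] H →ₗ[k] A) :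
    ((H ⊗[k] H) ⊗[k] H) ⊗[k] ((H ⊗[k] H) ⊗[k] H) →ₗ[k] A :=
  (TensorProduct.rid k A).toLinearMap ∘ₗ
  TensorProduct.map
    ((TensorProduct.rid k A).toLinearMap ∘ₗ
      TensorProduct.map f (counitH k H ∘ₗ LinearMap.mul' k H))
    (counitH k H ∘ₗ LinearMap.mul' k H) ∘ₗ
  LinearMap.rTensor (H ⊗[k] H) (TensorProduct.tensorTensorTensorComm k H H H H).toLinearMap ∘ₗ
  (TensorProduct.tensorTensorTensorComm k (H ⊗[k] H) H (H ⊗[k] H) H).toLinearMap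

private lemma core_tmul (f : H ⊗[k] H →ₗ[k] A) (a b c x y z : H) :
    core f (((a ⊗ₜ[k] b) ⊗ₜ[k] c) ⊗ₜ[k] ((x ⊗ₜ[k] y) ⊗ₜ[k] z))
      = (counitH k H (c * z) * counitH k H (b * y)) • f (a ⊗ₜ[k] x) := by
  unfold core
  simp [LinearMap.mul'_apply, mul_smul]

end StatementZeroMaps

end WeakCrossed

namespace WeakCrossed

section StatementZeroI1

open Coalgebra

variable {k : Type*} [Field k]
    {H : Type*} [Ring H] [Algebra k H] [Coalgebra k H]
    {A : Type*} [Ring A] [Algebra k A]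

private lemma counit_expand2 {z : H} {ι κ : Type*} {s : Finset ι} {t : ι → Finset κ}
    {u v : ι → κ → H}
    (hz : comulH k H z = ∑ i ∈ s, ∑ j ∈ t i, u i j ⊗ₜ[k] v i j) :
    ∑ i ∈ s, ∑ j ∈ t i, counitH k H (v i j) • u i j = z := by
  have h := congrArg ((TensorProduct.rid k H).toLinearMap ∘ₗ
    LinearMap.lTensor H (counitH k H)) hz
  simp only [LinearMap.comp_apply, LinearEquiv.coe_coe, Coalgebra.lTensor_counit_comul,
    map_sum, LinearMap.lTensor_tmul, TensorProduct.rid_tmul, one_smul] at h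
  exact h.symm

/-- `u ⊗ v ↦ ε(g v) • u` -/
private def B1 (k : Type*) {H : Type*} [Field k] [Ring H] [Algebra k H] [Coalgebra k H]
    (g : H) : H ⊗[k] H →ₗ[k] H :=
  (TensorProduct.rid k H).toLinearMap ∘ₗ
    LinearMap.lTensor H (counitH k H ∘ₗ LinearMap.mulLeft k g)

private lemma B1_tmul (g u v : H) : B1 k g (u ⊗ₜ[k] v) = counitH k H (g * v) • u := by
  simp [B1]

private lemma I1 (hWB : IsWeakBialgebra k H) (g w : H)
    (r1 : Coalgebra.Repr k (1 : H) (H × H)) (rw : Coalgebra.Repr k w (H × H)) :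
    piR k H g * w = ∑ j ∈ rw.index, counitH k H (g * rw.right j) • rw.left j := by
  classical
  set Ra : (i : r1.ι) → Coalgebra.Repr k (r1.left i) (H × H) := fun i => ℛ k (r1.left i) with hRa
  set Rb : (i : r1.ι) → Coalgebra.Repr k (r1.right i) (H × H) := fun i => ℛ k (r1.right i) with hRb
  have step3 : piR k H g * w
      = (NH k w ∘ₗ scalR k g)
          (∑ p ∈ r1.index, ∑ r ∈ (Ra p).index,
            (Ra p).left r ⊗ₜ[k] ((Ra p).right r ⊗ₜ[k] r1.right p)) := by
    rw [piR_pt g r1, Finset.sum_mul, map_sum]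
    refine Finset.sum_congr rfl fun p _ => ?_
    have h2 : r1.left p * w
        = ∑ r ∈ (Ra p).index, ∑ j ∈ rw.index,
            counitH k H ((Ra p).right r * rw.right j) • ((Ra p).left r * rw.left j) :=
      (counit_expand2 (comul_mul_pt hWB (Ra p).eq.symm rw.eq.symm)).symm
    rw [smul_mul_assoc, h2, map_sum, Finset.smul_sum]
    refine Finset.sum_congr rfl fun r _ => ?_
    rw [LinearMap.comp_apply, scalR_tmul, map_smul, NH_tmul w rw, Finset.smul_sum]
  rw [Coalgebra.sum_tmul_tmul_eq r1 Ra Rb] at step3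
  have step5 : piR k H g * w
      = ∑ p ∈ r1.index, ∑ j ∈ rw.index,
          counitH k H (g * r1.right p * rw.right j) • (r1.left p * rw.left j) := by
    rw [step3, map_sum]
    refine Finset.sum_congr rfl fun p _ => ?_
    rw [map_sum]
    have : ∀ r ∈ (Rb p).index, (NH k w ∘ₗ scalR k g)
        (r1.left p ⊗ₜ[k] ((Rb p).left r ⊗ₜ[k] (Rb p).right r))
        = ∑ j ∈ rw.index,
            (counitH k H (g * (Rb p).right r) * counitH k H ((Rb p).left r * rw.right j))
              • (r1.left p * rw.left j) := by
      intro r _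
      rw [LinearMap.comp_apply, scalR_tmul, map_smul, NH_tmul w rw, Finset.smul_sum]
      refine Finset.sum_congr rfl fun j _ => ?_
      rw [smul_smul]
    rw [Finset.sum_congr rfl this, Finset.sum_comm]
    refine Finset.sum_congr rfl fun j _ => ?_
    rw [← Finset.sum_smul, ← eps_split_op hWB g (rw.right j) (Rb p).eq.symm]
  have step6 : ∑ p ∈ r1.index, ∑ j ∈ rw.index,
        counitH k H (g * r1.right p * rw.right j) • (r1.left p * rw.left j)
      = B1 k g (∑ p ∈ r1.index, ∑ j ∈ rw.index,
          (r1.left p * rw.left j) ⊗ₜ[k] (r1.right p * rw.right j)) := by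
    rw [map_sum]
    refine Finset.sum_congr rfl fun p _ => ?_
    rw [map_sum]
    refine Finset.sum_congr rfl fun j _ => ?_
    rw [B1_tmul, mul_assoc]
  have step7 : (∑ p ∈ r1.index, ∑ j ∈ rw.index,
        (r1.left p * rw.left j) ⊗ₜ[k] (r1.right p * rw.right j))
      = ∑ j ∈ rw.index, rw.left j ⊗ₜ[k] rw.right j := by
    rw [← comul_mul_pt hWB r1.eq.symm rw.eq.symm, one_mul, ← rw.eq]
  rw [step5, step6, step7, map_sum]
  refine Finset.sum_congr rfl fun j _ => ?_
  rw [B1_tmul]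

end StatementZeroI1

end WeakCrossed

namespace WeakCrossed

section StatementZeroG0

open Coalgebra

variable {k : Type*} [Field k]
    {H : Type*} [Ring H] [Algebra k H] [Coalgebra k H]
    {A : Type*} [Ring A] [Algebra k A]

private lemma hf_pt2 (f : H ⊗[k] H →ₗ[k] A) (hf : f = convCounitR f) {x y : H}
    {ι ι' κ : Type*} {s : Finset ι} {s' : Finset ι'} {u v : ι → ι' → H}
    {t : Finset κ} {c d : κ → H}
    (hx : comulH k H x = ∑ n ∈ s, ∑ r ∈ s', u n r ⊗ₜ[k] v n r)
    (hy : comulH k H y = ∑ j ∈ t, c j ⊗ₜ[k] d j) :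
    f (x ⊗ₜ[k] y) = ∑ n ∈ s, ∑ r ∈ s', ∑ j ∈ t,
      counitH k H (v n r * d j) • f (u n r ⊗ₜ[k] c j) := by
  conv_lhs => rw [hf]
  unfold convCounitR comul2
  simp only [LinearMap.comp_apply, LinearEquiv.coe_coe, TensorProduct.map_tmul]
  rw [hx, hy, TensorProduct.sum_tmul]
  simp only [TensorProduct.sum_tmul, TensorProduct.tmul_sum, map_sum]
  refine Finset.sum_congr rfl fun n _ => ?_
  rw [Finset.sum_comm]
  refine Finset.sum_congr rfl fun r _ => Finset.sum_congr rfl fun j _ => ?_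
  simp [LinearMap.mul'_apply]

/-- `u ⊗ (v ⊗ w) ↦ (ε(x3 w) * ε(x2 v)) • f (x1 ⊗ u)` -/
private def pt3 (f : H ⊗[k] H →ₗ[k] A) (x1 x2 x3 : H) :
    H ⊗[k] (H ⊗[k] H) →ₗ[k] A :=
  core f ∘ₗ
    (TensorProduct.mk k ((H ⊗[k] H) ⊗[k] H) ((H ⊗[k] H) ⊗[k] H)) ((x1 ⊗ₜ[k] x2) ⊗ₜ[k] x3) ∘ₗ
    (TensorProduct.assoc k H H H).symm.toLinearMap

private lemma pt3_tmul (f : H ⊗[k] H →ₗ[k] A) (x1 x2 x3 u v w : H) :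
    pt3 f x1 x2 x3 (u ⊗ₜ[k] (v ⊗ₜ[k] w))
      = (counitH k H (x3 * w) * counitH k H (x2 * v)) • f (x1 ⊗ₜ[k] u) := by
  simp [pt3, core_tmul]

/-- coassociativity transport on the second tensor factor -/
private lemma key_y (f : H ⊗[k] H →ₗ[k] A) {y : H} (ry : Coalgebra.Repr k y (H × H))
    (Yc : (j : ry.ι) → Coalgebra.Repr k (ry.left j) (H × H))
    (Yd : (j : ry.ι) → Coalgebra.Repr k (ry.right j) (H × H))
    (x1 x2 x3 : H) :
    ∑ j ∈ ry.index, ∑ t ∈ (Yc j).index,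
      (counitH k H (x3 * ry.right j) * counitH k H (x2 * (Yc j).right t))
        • f (x1 ⊗ₜ[k] (Yc j).left t)
    = ∑ j ∈ ry.index, ∑ t ∈ (Yd j).index,
      (counitH k H (x3 * (Yd j).right t) * counitH k H (x2 * (Yd j).left t))
        • f (x1 ⊗ₜ[k] ry.left j) := by
  have h := congrArg (pt3 f x1 x2 x3) (Coalgebra.sum_tmul_tmul_eq ry Yc Yd)
  simp only [map_sum, pt3_tmul] at h
  exact h

end StatementZeroG0

end WeakCrossed

namespace WeakCrossed

section StatementZeroG0b

open Coalgebra

variable {k : Type*} [Field k]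
    {H : Type*} [Ring H] [Algebra k H] [Coalgebra k H]
    {A : Type*} [Ring A] [Algebra k A]

private lemma comul3H_eq (y : H) (ry : Coalgebra.Repr k y (H × H))
    (Yc : (j : ry.ι) → Coalgebra.Repr k (ry.left j) (H × H)) :
    comul3H k H y = ∑ j ∈ ry.index, ∑ t ∈ (Yc j).index,
      ((Yc j).left t ⊗ₜ[k] (Yc j).right t) ⊗ₜ[k] ry.right j := by
  unfold comul3H
  rw [LinearMap.comp_apply,
    show comulH k H y = ∑ j ∈ ry.index, ry.left j ⊗ₜ[k] ry.right j from ry.eq.symm, map_sum]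
  refine Finset.sum_congr rfl fun j _ => ?_
  rw [LinearMap.rTensor_tmul,
    show comulH k H (ry.left j)
      = ∑ t ∈ (Yc j).index, (Yc j).left t ⊗ₜ[k] (Yc j).right t from (Yc j).eq.symm,
    TensorProduct.sum_tmul]

private def Lg2 (f : H ⊗[k] H →ₗ[k] A) (q y : H) : H ⊗[k] (H ⊗[k] H) →ₗ[k] A :=
  core f ∘ₗ
    (TensorProduct.mk k ((H ⊗[k] H) ⊗[k] H) ((H ⊗[k] H) ⊗[k] H)).flip (comul3H k H y) ∘ₗ
    LinearMap.rTensor H (LinearMap.mulLeft k (comulH k H q)) ∘ₗ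
    (TensorProduct.assoc k H H H).symm.toLinearMap

private lemma Lg2_tmul (f : H ⊗[k] H →ₗ[k] A) (q y : H) (rq : Coalgebra.Repr k q (H × H))
    (ry : Coalgebra.Repr k y (H × H)) (Yc : (j : ry.ι) → Coalgebra.Repr k (ry.left j) (H × H))
    (x y' t0 : H) :
    Lg2 f q y (x ⊗ₜ[k] (y' ⊗ₜ[k] t0))
      = ∑ n ∈ rq.index, ∑ j ∈ ry.index, ∑ t ∈ (Yc j).index,
        (counitH k H (t0 * ry.right j)
          * counitH k H (rq.right n * y' * (Yc j).right t))
          • f ((rq.left n * x) ⊗ₜ[k] (Yc j).left t) := by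
  unfold Lg2
  simp only [LinearMap.comp_apply, LinearEquiv.coe_coe, TensorProduct.assoc_symm_tmul,
    LinearMap.rTensor_tmul, LinearMap.mulLeft_apply, LinearMap.flip_apply,
    TensorProduct.mk_apply]
  rw [show comulH k H q = ∑ n ∈ rq.index, rq.left n ⊗ₜ[k] rq.right n from rq.eq.symm,
    Finset.sum_mul, comul3H_eq y ry Yc]
  simp only [Algebra.TensorProduct.tmul_mul_tmul, TensorProduct.sum_tmul,
    TensorProduct.tmul_sum, map_sum, core_tmul]
  exact (Finset.sum_congr rfl (fun j _ => Finset.sum_comm)).trans Finset.sum_comm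

private lemma G0 (hWB : IsWeakBialgebra k H) (f : H ⊗[k] H →ₗ[k] A)
    (hf : f = convCounitR f) (q y : H)
    (r1 : Coalgebra.Repr k (1 : H) (H × H)) (ry : Coalgebra.Repr k y (H × H)) :
    ∑ p ∈ r1.index, ∑ j ∈ ry.index,
      counitH k H (r1.right p * ry.right j) • f ((q * r1.left p) ⊗ₜ[k] ry.left j)
      = f (q ⊗ₜ[k] y) := by
  classical
  set rq : Coalgebra.Repr k q (H × H) := ℛ k q with hrq
  set Ra : (i : r1.ι) → Coalgebra.Repr k (r1.left i) (H × H) := fun i => ℛ k (r1.left i) with hRa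
  set Rb : (i : r1.ι) → Coalgebra.Repr k (r1.right i) (H × H) := fun i => ℛ k (r1.right i) with hRb
  set Yc : (j : ry.ι) → Coalgebra.Repr k (ry.left j) (H × H) := fun j => ℛ k (ry.left j) with hYc
  set Yd : (j : ry.ι) → Coalgebra.Repr k (ry.right j) (H × H) := fun j => ℛ k (ry.right j) with hYd
  -- Step A: expand f((q*a_p) ⊗ c_j) by the normalization hf and reorder
  have hA : ∑ p ∈ r1.index, ∑ j ∈ ry.index,
      counitH k H (r1.right p * ry.right j) • f ((q * r1.left p) ⊗ₜ[k] ry.left j)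
      = ∑ p ∈ r1.index, ∑ r ∈ (Ra p).index,
          Lg2 f q y ((Ra p).left r ⊗ₜ[k] ((Ra p).right r ⊗ₜ[k] r1.right p)) := by
    refine Finset.sum_congr rfl fun p _ => ?_
    have h1 : ∀ j ∈ ry.index,
        counitH k H (r1.right p * ry.right j) • f ((q * r1.left p) ⊗ₜ[k] ry.left j)
        = ∑ n ∈ rq.index, ∑ r ∈ (Ra p).index, ∑ t ∈ (Yc j).index,
            (counitH k H (r1.right p * ry.right j)
              * counitH k H (rq.right n * (Ra p).right r * (Yc j).right t))
              • f ((rq.left n * (Ra p).left r) ⊗ₜ[k] (Yc j).left t) := by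
      intro j _
      rw [hf_pt2 f hf (comul_mul_pt hWB rq.eq.symm (Ra p).eq.symm) (Yc j).eq.symm,
        Finset.smul_sum]
      refine Finset.sum_congr rfl fun n _ => ?_
      rw [Finset.smul_sum]
      refine Finset.sum_congr rfl fun r _ => ?_
      rw [Finset.smul_sum]
      refine Finset.sum_congr rfl fun t _ => ?_
      rw [smul_smul]
    rw [Finset.sum_congr rfl h1]
    -- reorder (j,n,r,t) → (r,n,j,t)
    rw [show (∑ j ∈ ry.index, ∑ n ∈ rq.index, ∑ r ∈ (Ra p).index, ∑ t ∈ (Yc j).index,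
        (counitH k H (r1.right p * ry.right j)
          * counitH k H (rq.right n * (Ra p).right r * (Yc j).right t))
          • f ((rq.left n * (Ra p).left r) ⊗ₜ[k] (Yc j).left t))
      = ∑ r ∈ (Ra p).index, ∑ n ∈ rq.index, ∑ j ∈ ry.index, ∑ t ∈ (Yc j).index,
        (counitH k H (r1.right p * ry.right j)
          * counitH k H (rq.right n * (Ra p).right r * (Yc j).right t))
          • f ((rq.left n * (Ra p).left r) ⊗ₜ[k] (Yc j).left t) from ?_]
    · refine Finset.sum_congr rfl fun r _ => ?_
      rw [Lg2_tmul f q y rq ry Yc]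
    · exact ((Finset.sum_congr rfl (fun j _ => Finset.sum_comm)).trans
        Finset.sum_comm).trans (Finset.sum_congr rfl (fun r _ => Finset.sum_comm))
  rw [hA]
  rw [show (∑ p ∈ r1.index, ∑ r ∈ (Ra p).index,
        Lg2 f q y ((Ra p).left r ⊗ₜ[k] ((Ra p).right r ⊗ₜ[k] r1.right p)))
      = Lg2 f q y (∑ p ∈ r1.index, ∑ r ∈ (Ra p).index,
          (Ra p).left r ⊗ₜ[k] ((Ra p).right r ⊗ₜ[k] r1.right p)) by
    simp only [map_sum]]
  rw [Coalgebra.sum_tmul_tmul_eq r1 Ra Rb]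
  simp only [map_sum]
  -- Step B: evaluate, transport coassociativity on the y side, merge counits
  have hB : ∀ p ∈ r1.index, ∀ r ∈ (Rb p).index,
      Lg2 f q y (r1.left p ⊗ₜ[k] ((Rb p).left r ⊗ₜ[k] (Rb p).right r))
      = ∑ n ∈ rq.index, ∑ j ∈ ry.index, ∑ t ∈ (Yd j).index,
        (counitH k H ((Rb p).right r * (Yd j).right t)
          * counitH k H (rq.right n * (Rb p).left r * (Yd j).left t))
          • f ((rq.left n * r1.left p) ⊗ₜ[k] ry.left j) := by
    intro p _ r _
    rw [Lg2_tmul f q y rq ry Yc]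
    refine Finset.sum_congr rfl fun n _ => ?_
    exact key_y f ry Yc Yd (rq.left n * r1.left p)
      (rq.right n * (Rb p).left r) ((Rb p).right r)
  rw [Finset.sum_congr rfl (fun p hp => Finset.sum_congr rfl (fun r hr => hB p hp r hr))]
  -- Step C: merge the counit factors (g4) after reordering (r,n,j) → (n,j,r)
  have hC : ∀ p ∈ r1.index,
      (∑ r ∈ (Rb p).index, ∑ n ∈ rq.index, ∑ j ∈ ry.index, ∑ t ∈ (Yd j).index,
        (counitH k H ((Rb p).right r * (Yd j).right t)
          * counitH k H (rq.right n * (Rb p).left r * (Yd j).left t))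
          • f ((rq.left n * r1.left p) ⊗ₜ[k] ry.left j))
      = ∑ n ∈ rq.index, ∑ j ∈ ry.index,
          counitH k H (rq.right n * (r1.right p * ry.right j))
            • f ((rq.left n * r1.left p) ⊗ₜ[k] ry.left j) := by
    intro p _
    rw [Finset.sum_comm]
    refine Finset.sum_congr rfl fun n _ => ?_
    rw [Finset.sum_comm]
    refine Finset.sum_congr rfl fun j _ => ?_
    rw [Finset.sum_congr rfl fun r _ => Finset.sum_smul.symm, ← Finset.sum_smul]
    congr 1
    have hexp : r1.right p * ry.right j
        = ∑ r ∈ (Rb p).index, ∑ t ∈ (Yd j).index,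
            counitH k H ((Rb p).right r * (Yd j).right t)
              • ((Rb p).left r * (Yd j).left t) :=
      (counit_expand2 (comul_mul_pt hWB (Rb p).eq.symm (Yd j).eq.symm)).symm
    have := congrArg (counitH k H ∘ₗ LinearMap.mulLeft k (rq.right n)) hexp
    simp only [LinearMap.comp_apply, LinearMap.mulLeft_apply, map_sum, Finset.mul_sum,
      map_smul, smul_eq_mul] at this
    rw [this]
    refine Finset.sum_congr rfl fun r _ => Finset.sum_congr rfl fun t _ => ?_
    rw [mul_assoc (rq.right n)]
  rw [Finset.sum_congr rfl hC]
  -- Step D: contract Δ(q)Δ(1) = Δ(q) (g5)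
  have hD : ∑ p ∈ r1.index, ∑ n ∈ rq.index, ∑ j ∈ ry.index,
      counitH k H (rq.right n * (r1.right p * ry.right j))
        • f ((rq.left n * r1.left p) ⊗ₜ[k] ry.left j)
      = B2 f y (∑ n ∈ rq.index, ∑ p ∈ r1.index,
          (rq.left n * r1.left p) ⊗ₜ[k] (rq.right n * r1.right p)) := by
    rw [Finset.sum_comm, map_sum]
    refine Finset.sum_congr rfl fun n _ => ?_
    rw [map_sum]
    refine Finset.sum_congr rfl fun p _ => ?_
    rw [B2_tmul f y ry]
    refine Finset.sum_congr rfl fun j _ => ?_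
    rw [mul_assoc]
  rw [hD, ← comul_mul_pt hWB rq.eq.symm r1.eq.symm, mul_one,
    show comulH k H q = ∑ n ∈ rq.index, rq.left n ⊗ₜ[k] rq.right n from rq.eq.symm,
    map_sum]
  rw [hf_pt f hf rq.eq.symm ry.eq.symm]
  refine Finset.sum_congr rfl fun n _ => ?_
  rw [B2_tmul f y ry]

end StatementZeroG0b

end WeakCrossed

namespace WeakCrossed

section StatementZeroMain

open Coalgebra

variable {k : Type*} [Field k]
    {H : Type*} [Ring H] [Algebra k H] [Coalgebra k H]
    {A : Type*} [Ring A] [Algebra k A]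

/-- `x ⊗ t ↦ Σ ε(t * l₂) • f((h*x) ⊗ l₁)` -/
private def NB (f : H ⊗[k] H →ₗ[k] A) (h l : H) : H ⊗[k] H →ₗ[k] A :=
  B2 f l ∘ₗ LinearMap.rTensor H (LinearMap.mulLeft k h)

private lemma NB_tmul (f : H ⊗[k] H →ₗ[k] A) (h l : H) (rl : Coalgebra.Repr k l (H × H))
    (x t : H) : NB f h l (x ⊗ₜ[k] t)
      = ∑ j ∈ rl.index, counitH k H (t * rl.right j) • f ((h * x) ⊗ₜ[k] rl.left j) := by
  rw [NB, LinearMap.comp_apply, LinearMap.rTensor_tmul, LinearMap.mulLeft_apply,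
    B2_tmul f l rl]

private def Lm3 (f : H ⊗[k] H →ₗ[k] A) (h g l : H) : H ⊗[k] (H ⊗[k] H) →ₗ[k] A :=
  NB f h l ∘ₗ scalM k g

private lemma Lm3_tmul (f : H ⊗[k] H →ₗ[k] A) (h g l : H) (rl : Coalgebra.Repr k l (H × H))
    (x y t : H) : Lm3 f h g l (x ⊗ₜ[k] (y ⊗ₜ[k] t))
      = ∑ j ∈ rl.index, (counitH k H (g * y) * counitH k H (t * rl.right j))
          • f ((h * x) ⊗ₜ[k] rl.left j) := by
  rw [Lm3, LinearMap.comp_apply, scalM_tmul, map_smul, NB_tmul f h l rl, Finset.smul_sum]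
  refine Finset.sum_congr rfl fun j _ => ?_
  rw [smul_smul]

private def Lm10 (f : H ⊗[k] H →ₗ[k] A) (h g l : H) : H ⊗[k] (H ⊗[k] H) →ₗ[k] A :=
  NB f h l ∘ₗ scalR k g

private lemma Lm10_tmul (f : H ⊗[k] H →ₗ[k] A) (h g l : H) (rl : Coalgebra.Repr k l (H × H))
    (x y t : H) : Lm10 f h g l (x ⊗ₜ[k] (y ⊗ₜ[k] t))
      = ∑ j ∈ rl.index, (counitH k H (g * t) * counitH k H (y * rl.right j))
          • f ((h * x) ⊗ₜ[k] rl.left j) := by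
  rw [Lm10, LinearMap.comp_apply, scalR_tmul, map_smul, NB_tmul f h l rl, Finset.smul_sum]
  refine Finset.sum_congr rfl fun j _ => ?_
  rw [smul_smul]

/-- `c ⊗ e ↦ Σ ε(1₂ * e) • f((h*1₁) ⊗ c)` -/
private def N2 (f : H ⊗[k] H →ₗ[k] A) (h : H) : H ⊗[k] H →ₗ[k] A :=
  (TensorProduct.rid k A).toLinearMap ∘ₗ
    TensorProduct.map f (counitH k H ∘ₗ LinearMap.mul' k H) ∘ₗ
    (TensorProduct.tensorTensorTensorComm k H H H H).toLinearMap ∘ₗ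
    (TensorProduct.mk k (H ⊗[k] H) (H ⊗[k] H))
      (LinearMap.rTensor H (LinearMap.mulLeft k h) (comulH k H 1))

private lemma N2_tmul (f : H ⊗[k] H →ₗ[k] A) (h : H) (r1 : Coalgebra.Repr k (1 : H) (H × H))
    (c e : H) : N2 f h (c ⊗ₜ[k] e)
      = ∑ p ∈ r1.index, counitH k H (r1.right p * e) • f ((h * r1.left p) ⊗ₜ[k] c) := by
  unfold N2
  simp only [LinearMap.comp_apply, LinearEquiv.coe_coe, TensorProduct.mk_apply]
  rw [show comulH k H (1:H) = ∑ p ∈ r1.index, r1.left p ⊗ₜ[k] r1.right p from r1.eq.symm,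
    map_sum, TensorProduct.sum_tmul]
  simp [LinearMap.mul'_apply]

private def Lm7 (f : H ⊗[k] H →ₗ[k] A) (h g : H) : H ⊗[k] (H ⊗[k] H) →ₗ[k] A :=
  N2 f h ∘ₗ scalR k g

private lemma Lm7_tmul (f : H ⊗[k] H →ₗ[k] A) (h g : H) (r1 : Coalgebra.Repr k (1 : H) (H × H))
    (c e d : H) : Lm7 f h g (c ⊗ₜ[k] (e ⊗ₜ[k] d))
      = ∑ p ∈ r1.index, (counitH k H (g * d) * counitH k H (r1.right p * e))
          • f ((h * r1.left p) ⊗ₜ[k] c) := by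
  rw [Lm7, LinearMap.comp_apply, scalR_tmul, map_smul, N2_tmul f h r1, Finset.smul_sum]
  refine Finset.sum_congr rfl fun p _ => ?_
  rw [smul_smul]

private lemma comul_one_pt (hWB : IsWeakBialgebra k H) (r1 : Coalgebra.Repr k (1 : H) (H × H))
    (Rb : (i : r1.ι) → Coalgebra.Repr k (r1.right i) (H × H)) :
    ∑ p ∈ r1.index, ∑ r ∈ (Rb p).index,
      r1.left p ⊗ₜ[k] ((Rb p).left r ⊗ₜ[k] (Rb p).right r)
    = ∑ p ∈ r1.index, ∑ q ∈ r1.index,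
      r1.left p ⊗ₜ[k] ((r1.right p * r1.left q) ⊗ₜ[k] r1.right q) := by
  have h := congrArg (TensorProduct.assoc k H H H) hWB.comul_one_left
  have hL : (TensorProduct.assoc k H H H) (comul3H k H 1)
      = ∑ p ∈ r1.index, ∑ r ∈ (Rb p).index,
          r1.left p ⊗ₜ[k] ((Rb p).left r ⊗ₜ[k] (Rb p).right r) := by
    unfold comul3H
    rw [LinearMap.comp_apply, Coalgebra.coassoc_apply,
      show comulH k H (1:H) = ∑ p ∈ r1.index, r1.left p ⊗ₜ[k] r1.right p from r1.eq.symm,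
      map_sum]
    refine Finset.sum_congr rfl fun p _ => ?_
    rw [LinearMap.lTensor_tmul,
      show comulH k H (r1.right p)
        = ∑ r ∈ (Rb p).index, (Rb p).left r ⊗ₜ[k] (Rb p).right r from (Rb p).eq.symm,
      TensorProduct.tmul_sum]
  have hR : (TensorProduct.assoc k H H H)
        ((comulH k H 1 ⊗ₜ[k] (1 : H)) *
          (TensorProduct.assoc k H H H).symm ((1 : H) ⊗ₜ[k] comulH k H 1))
      = ∑ p ∈ r1.index, ∑ q ∈ r1.index,
          r1.left p ⊗ₜ[k] ((r1.right p * r1.left q) ⊗ₜ[k] r1.right q) := by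
    rw [show comulH k H (1:H) = ∑ p ∈ r1.index, r1.left p ⊗ₜ[k] r1.right p from r1.eq.symm,
      TensorProduct.sum_tmul, TensorProduct.tmul_sum, map_sum, Finset.sum_mul_sum]
    simp only [TensorProduct.assoc_symm_tmul, Algebra.TensorProduct.tmul_mul_tmul,
      mul_one, one_mul, map_sum, TensorProduct.assoc_tmul]
  rw [← hL, h, hR]

end StatementZeroMain

end WeakCrossed

namespace WeakCrossed

open Coalgebra

/-- If `f : H ⊗ H → A` satisfies
`f(h⊗g) = Σ f(h₍₁₎⊗g₍₁₎) ε(h₍₂₎g₍₂₎)`, then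
`f(h Π^R(g) ⊗ l) = f(h ⊗ Π^R(g) l)` for all `h g l`. -/
theorem statement_0 {k : Type*} [Field k]
    {H : Type*} [Ring H] [Algebra k H] [Coalgebra k H]
    {A : Type*} [Ring A] [Algebra k A]
    (hWB : IsWeakBialgebra k H)
    (f : H ⊗[k] H →ₗ[k] A)
    (hf : f = convCounitR f) :
    ∀ h g l : H,
      f ((h * piR k H g) ⊗ₜ[k] l) = f (h ⊗ₜ[k] (piR k H g * l)) := by
  intro h g l
  classical
  set r1 : Coalgebra.Repr k (1 : H) (H × H) := ℛ k (1 : H) with hr1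
  set rl : Coalgebra.Repr k l (H × H) := ℛ k l with hrl
  set Ra : (i : r1.ι) → Coalgebra.Repr k (r1.left i) (H × H) := fun i => ℛ k (r1.left i) with hRa
  set Rb : (i : r1.ι) → Coalgebra.Repr k (r1.right i) (H × H) := fun i => ℛ k (r1.right i) with hRb
  set Lc : (j : rl.ι) → Coalgebra.Repr k (rl.left j) (H × H) := fun j => ℛ k (rl.left j) with hLc
  set Ld : (j : rl.ι) → Coalgebra.Repr k (rl.right j) (H × H) := fun j => ℛ k (rl.right j) with hLd
  have hT1 : f ((h * piR k H g) ⊗ₜ[k] l)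
      = ∑ p ∈ r1.index, ∑ j ∈ rl.index,
          counitH k H (g * r1.right p * rl.right j)
            • f ((h * r1.left p) ⊗ₜ[k] rl.left j) := by
    rw [← G0 hWB f hf (h * piR k H g) l r1 rl]
    have m2 : ∀ p ∈ r1.index,
        (∑ j ∈ rl.index, counitH k H (r1.right p * rl.right j)
          • f ((h * piR k H g * r1.left p) ⊗ₜ[k] rl.left j))
        = ∑ r ∈ (Ra p).index,
            Lm3 f h g l ((Ra p).left r ⊗ₜ[k] ((Ra p).right r ⊗ₜ[k] r1.right p)) := by
      intro p _
      have expand : ∀ j ∈ rl.index,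
          counitH k H (r1.right p * rl.right j)
            • f ((h * piR k H g * r1.left p) ⊗ₜ[k] rl.left j)
          = ∑ r ∈ (Ra p).index,
              (counitH k H (g * (Ra p).right r) * counitH k H (r1.right p * rl.right j))
                • f ((h * (Ra p).left r) ⊗ₜ[k] rl.left j) := by
        intro j _
        rw [mul_assoc, I1 hWB g (r1.left p) r1 (Ra p), Finset.mul_sum]
        simp only [mul_smul_comm]
        rw [TensorProduct.sum_tmul, map_sum, Finset.smul_sum]
        refine Finset.sum_congr rfl fun r _ => ?_
        rw [← TensorProduct.smul_tmul', map_smul, smul_smul, mul_comm]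
      rw [Finset.sum_congr rfl expand, Finset.sum_comm]
      refine Finset.sum_congr rfl fun r _ => ?_
      rw [Lm3_tmul f h g l rl]
    rw [Finset.sum_congr rfl m2]
    rw [show (∑ p ∈ r1.index, ∑ r ∈ (Ra p).index,
          Lm3 f h g l ((Ra p).left r ⊗ₜ[k] ((Ra p).right r ⊗ₜ[k] r1.right p)))
        = Lm3 f h g l (∑ p ∈ r1.index, ∑ r ∈ (Ra p).index,
            (Ra p).left r ⊗ₜ[k] ((Ra p).right r ⊗ₜ[k] r1.right p)) by simp only [map_sum]]
    rw [Coalgebra.sum_tmul_tmul_eq r1 Ra Rb]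
    simp only [map_sum]
    refine Finset.sum_congr rfl fun p _ => ?_
    rw [Finset.sum_congr rfl (fun r (_ : r ∈ (Rb p).index) => Lm3_tmul f h g l rl
      (r1.left p) ((Rb p).left r) ((Rb p).right r)), Finset.sum_comm]
    refine Finset.sum_congr rfl fun j _ => ?_
    rw [← Finset.sum_smul, ← eps_split hWB g (rl.right j) (Rb p).eq.symm]
  have hT2 : f (h ⊗ₜ[k] (piR k H g * l))
      = ∑ p ∈ r1.index, ∑ j ∈ rl.index,
          counitH k H (g * r1.right p * rl.right j)
            • f ((h * r1.left p) ⊗ₜ[k] rl.left j) := by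
    rw [I1 hWB g l r1 rl, TensorProduct.tmul_sum]
    simp only [TensorProduct.tmul_smul, map_sum, map_smul]
    have m6 : ∀ j ∈ rl.index,
        counitH k H (g * rl.right j) • f (h ⊗ₜ[k] rl.left j)
        = ∑ t ∈ (Lc j).index,
            Lm7 f h g ((Lc j).left t ⊗ₜ[k] ((Lc j).right t ⊗ₜ[k] rl.right j)) := by
      intro j _
      rw [← G0 hWB f hf h (rl.left j) r1 (Lc j)]
      simp only [Finset.smul_sum]
      rw [Finset.sum_comm]
      refine Finset.sum_congr rfl fun t _ => ?_
      rw [Lm7_tmul f h g r1]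
      refine Finset.sum_congr rfl fun p _ => ?_
      rw [smul_smul]
    rw [Finset.sum_congr rfl m6]
    rw [show (∑ j ∈ rl.index, ∑ t ∈ (Lc j).index,
          Lm7 f h g ((Lc j).left t ⊗ₜ[k] ((Lc j).right t ⊗ₜ[k] rl.right j)))
        = Lm7 f h g (∑ j ∈ rl.index, ∑ t ∈ (Lc j).index,
            (Lc j).left t ⊗ₜ[k] ((Lc j).right t ⊗ₜ[k] rl.right j)) by simp only [map_sum]]
    rw [Coalgebra.sum_tmul_tmul_eq rl Lc Ld]
    simp only [map_sum]
    have m8 : ∀ j ∈ rl.index,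
        (∑ t ∈ (Ld j).index,
          Lm7 f h g (rl.left j ⊗ₜ[k] ((Ld j).left t ⊗ₜ[k] (Ld j).right t)))
        = ∑ p ∈ r1.index,
            counitH k H (r1.right p * (piR k H g * rl.right j))
              • f ((h * r1.left p) ⊗ₜ[k] rl.left j) := by
      intro j _
      rw [Finset.sum_congr rfl (fun t (_ : t ∈ (Ld j).index) => Lm7_tmul f h g r1
        (rl.left j) ((Ld j).left t) ((Ld j).right t)), Finset.sum_comm]
      refine Finset.sum_congr rfl fun p _ => ?_
      rw [← Finset.sum_smul]
      congr 1
      have hI : piR k H g * rl.right j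
          = ∑ t ∈ (Ld j).index,
              counitH k H (g * (Ld j).right t) • (Ld j).left t :=
        I1 hWB g (rl.right j) r1 (Ld j)
      have := congrArg (counitH k H ∘ₗ LinearMap.mulLeft k (r1.right p)) hI
      simp only [LinearMap.comp_apply, LinearMap.mulLeft_apply, Finset.mul_sum,
        map_sum, map_smul, mul_smul_comm, smul_eq_mul] at this
      rw [this]
    rw [Finset.sum_congr rfl m8]
    have m9 : ∀ j ∈ rl.index, ∀ p ∈ r1.index,
        counitH k H (r1.right p * (piR k H g * rl.right j))
          • f ((h * r1.left p) ⊗ₜ[k] rl.left j)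
        = ∑ q ∈ r1.index,
            (counitH k H (g * r1.right q) * counitH k H (r1.right p * r1.left q * rl.right j))
              • f ((h * r1.left p) ⊗ₜ[k] rl.left j) := by
      intro j _ p _
      rw [← Finset.sum_smul]
      congr 1
      rw [← mul_assoc, piR_pt g r1, Finset.mul_sum, Finset.sum_mul]
      simp only [mul_smul_comm, smul_mul_assoc, map_sum, map_smul, smul_eq_mul]
    rw [Finset.sum_congr rfl (fun j hj => Finset.sum_congr rfl (fun p hp => m9 j hj p hp))]
    rw [Finset.sum_comm]
    have m10 : ∀ p ∈ r1.index,
        (∑ j ∈ rl.index, ∑ q ∈ r1.index,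
          (counitH k H (g * r1.right q) * counitH k H (r1.right p * r1.left q * rl.right j))
            • f ((h * r1.left p) ⊗ₜ[k] rl.left j))
        = ∑ q ∈ r1.index,
            Lm10 f h g l (r1.left p ⊗ₜ[k] ((r1.right p * r1.left q) ⊗ₜ[k] r1.right q)) := by
      intro p _
      rw [Finset.sum_comm]
      refine Finset.sum_congr rfl fun q _ => ?_
      rw [Lm10_tmul f h g l rl]
    rw [Finset.sum_congr rfl m10]
    rw [show (∑ p ∈ r1.index, ∑ q ∈ r1.index,
          Lm10 f h g l (r1.left p ⊗ₜ[k] ((r1.right p * r1.left q) ⊗ₜ[k] r1.right q)))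
        = Lm10 f h g l (∑ p ∈ r1.index, ∑ q ∈ r1.index,
            r1.left p ⊗ₜ[k] ((r1.right p * r1.left q) ⊗ₜ[k] r1.right q)) by
      simp only [map_sum]]
    rw [← comul_one_pt hWB r1 Rb]
    simp only [map_sum]
    refine Finset.sum_congr rfl fun p _ => ?_
    rw [Finset.sum_congr rfl (fun r (_ : r ∈ (Rb p).index) => Lm10_tmul f h g l rl
      (r1.left p) ((Rb p).left r) ((Rb p).right r)), Finset.sum_comm]
    refine Finset.sum_congr rfl fun j _ => ?_
    rw [← Finset.sum_smul, ← eps_split_op hWB g (rl.right j) (Rb p).eq.symm]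
  rw [hT1, hT2]


end WeakCrossed
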